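/- Let P be a dynamic path instance with n ≥ 1. If w_0 ≥ 1, then for every index i with 0 ≤ i < n, the right limit of Θ_L(P,·) at x_i satisfies Θ_L(P,x_{i+1}) − τ·(x_{i+1} − x_i) ≥ Θ_L(P,x_i), i.e., all discontinuities of Θ_L(P,·) jump upward. Symmetrically, if w_n ≥ 1, then for every index i with 0 ≤ i < n, the left limit of Θ_R(P,·) at x_{i+1} satisfies Θ_R(P,x_i) − τ·(x_{i+1} − x_i) ≥ Θ_R(P,x_{i+1}). -/
import Mathlib


/-- A dynamic path instance: `n+1` vertices at strictly increasing coordinates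
`x 0 < x 1 < ⋯ < x n`, natural-number weights `w i`, positive integer capacities
`c j` (capacity of the edge from `x (j-1)` to `x j`, for `1 ≤ j ≤ n`), and a
positive travel time `τ` per unit distance. -/
structure DPath where
  n : ℕ
  x : ℕ → ℝ
  w : ℕ → ℕ
  c : ℕ → ℕ
  τ : ℝ
  hx : ∀ i, i < n → x i < x (i + 1)
  hc : ∀ j, 1 ≤ j → j ≤ n → 0 < c j
  hτ : 0 < τ

/-- `P.W a i = w_a + ⋯ + w_i`. -/
def DPath.W (P : DPath) (a i : ℕ) : ℕ := ∑ j ∈ Finset.Icc a i, P.w j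

/-- For a sink at `y` in subpath `P_{a,b}`: the minimum capacity
`min_{i+1 ≤ j ≤ k+1} c_j`, where `k` is the index with `x_k < y ≤ x_{k+1}`;
the edges `j` with `i+1 ≤ j ≤ k+1` are exactly those with `i+1 ≤ j ≤ b` and
`x (j-1) < y`. -/
noncomputable def DPath.cL (P : DPath) (b : ℕ) (y : ℝ) (i : ℕ) : ℕ :=
  sInf (P.c '' {j | i + 1 ≤ j ∧ j ≤ b ∧ P.x (j - 1) < y})

/-- For a sink at `y` in subpath `P_{a,b}`: the minimum capacity
`min_{k+1 ≤ j ≤ i} c_j`, where `k` is the index with `x_k ≤ y < x_{k+1}`;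
the edges `j` with `k+1 ≤ j ≤ i` are exactly those with `a+1 ≤ j ≤ i` and
`y < x j`. -/
noncomputable def DPath.cR (P : DPath) (a : ℕ) (y : ℝ) (i : ℕ) : ℕ :=
  sInf (P.c '' {j | a + 1 ≤ j ∧ j ≤ i ∧ y < P.x j})

/-- Left evacuation time `Θ_L(P_{a,b}, y)`: the maximum, over indices `i` with
`a ≤ i ≤ b`, `x i < y` and `W_{a,i} ≥ 1`, of
`(y − x_i)·τ + ⌈W_{a,i} / min_{i+1 ≤ j ≤ k+1} c_j⌉ − 1`; it is `0` if no such
index exists. -/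
noncomputable def ThetaL (P : DPath) (a b : ℕ) (y : ℝ) : ℝ :=
  sSup (insert 0 {t : ℝ | ∃ i, a ≤ i ∧ i ≤ b ∧ P.x i < y ∧ 1 ≤ P.W a i ∧
    t = (y - P.x i) * P.τ + (⌈(P.W a i : ℝ) / (P.cL b y i : ℝ)⌉ : ℝ) - 1})

/-- Right evacuation time `Θ_R(P_{a,b}, y)`. -/
noncomputable def ThetaR (P : DPath) (a b : ℕ) (y : ℝ) : ℝ :=
  sSup (insert 0 {t : ℝ | ∃ i, a ≤ i ∧ i ≤ b ∧ y < P.x i ∧ 1 ≤ P.W i b ∧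
    t = (P.x i - y) * P.τ + (⌈(P.W i b : ℝ) / (P.cR a y i : ℝ)⌉ : ℝ) - 1})

/-- Evacuation time of subpath `P_{a,b}` to sink `y`. -/
noncomputable def Theta (P : DPath) (a b : ℕ) (y : ℝ) : ℝ :=
  max (ThetaL P a b y) (ThetaR P a b y)

/-- `Θ¹(P_{a,b})`: minimum 1-sink evacuation time of subpath `P_{a,b}`
over sinks `y ∈ [x_a, x_b]`. -/
noncomputable def Theta1 (P : DPath) (a b : ℕ) : ℝ :=
  sInf (Theta P a b '' Set.Icc (P.x a) (P.x b))

/-- `Θᵏ(P_{a,b})`: minimum over all partitions of `{a, …, b}` into at most `k`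
nonempty intervals `[f j, f (j+1) - 1]`, of the maximum over the intervals of
`Θ¹`. -/
noncomputable def ThetaK (P : DPath) (k a b : ℕ) : ℝ :=
  sInf {t : ℝ | ∃ (m : ℕ) (f : ℕ → ℕ), 1 ≤ m ∧ m ≤ k ∧
    f 0 = a ∧ f m = b + 1 ∧ (∀ j, j < m → f j < f (j + 1)) ∧
    t = ⨆ j : Fin m, Theta1 P (f j.val) (f (j.val + 1) - 1)}

lemma DPath.x_le (P : DPath) {i j : ℕ} (hij : i ≤ j) (hj : j ≤ P.n) :
    P.x i ≤ P.x j := by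
  induction hij with
  | refl => exact le_refl _
  | @step m h ih =>
    exact le_trans (ih (le_trans (Nat.le_succ m) hj))
      (le_of_lt (P.hx m (Nat.lt_of_succ_le hj)))

lemma DPath.x_lt (P : DPath) {i j : ℕ} (hij : i < j) (hj : j ≤ P.n) :
    P.x i < P.x j := by
  obtain ⟨k, rfl⟩ : ∃ k, j = i + k + 1 := ⟨j - i - 1, by omega⟩
  exact lt_of_le_of_lt (P.x_le (Nat.le_add_right i k) (by omega))
    (P.hx (i + k) (by omega))

lemma DPath.cL_pos (P : DPath) {b i : ℕ} {y : ℝ} (hb : b ≤ P.n)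
    (h : ({j | i + 1 ≤ j ∧ j ≤ b ∧ P.x (j - 1) < y}).Nonempty) :
    0 < P.cL b y i := by
  obtain ⟨e, ⟨h1, h2, _⟩, heq⟩ := Nat.sInf_mem (h.image P.c)
  rw [DPath.cL, ← heq]
  exact P.hc e (le_trans (Nat.le_add_left 1 i) h1) (le_trans h2 hb)

lemma DPath.cL_anti (P : DPath) {b i : ℕ} {y y' : ℝ} (hyy : y ≤ y')
    (h : ({j | i + 1 ≤ j ∧ j ≤ b ∧ P.x (j - 1) < y}).Nonempty) :
    P.cL b y' i ≤ P.cL b y i := by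
  obtain ⟨e, ⟨h1, h2, h3⟩, heq⟩ := Nat.sInf_mem (h.image P.c)
  simp only [DPath.cL]
  rw [← heq]
  exact Nat.sInf_le ⟨e, ⟨h1, h2, lt_of_lt_of_le h3 hyy⟩, rfl⟩

lemma DPath.cR_pos (P : DPath) {a i : ℕ} {y : ℝ} (hi : i ≤ P.n)
    (h : ({j | a + 1 ≤ j ∧ j ≤ i ∧ y < P.x j}).Nonempty) :
    0 < P.cR a y i := by
  obtain ⟨e, ⟨h1, h2, _⟩, heq⟩ := Nat.sInf_mem (h.image P.c)
  rw [DPath.cR, ← heq]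
  exact P.hc e (le_trans (Nat.le_add_left 1 a) h1) (le_trans h2 hi)

lemma DPath.cR_anti (P : DPath) {a i : ℕ} {y y' : ℝ} (hyy : y ≤ y')
    (h : ({j | a + 1 ≤ j ∧ j ≤ i ∧ y' < P.x j}).Nonempty) :
    P.cR a y i ≤ P.cR a y' i := by
  obtain ⟨e, ⟨h1, h2, h3⟩, heq⟩ := Nat.sInf_mem (h.image P.c)
  simp only [DPath.cR]
  rw [← heq]
  exact Nat.sInf_le ⟨e, ⟨h1, h2, lt_of_le_of_lt hyy h3⟩, rfl⟩

lemma ceil_div_one_le {W c : ℕ} (hW : 1 ≤ W) (hc : 0 < c) :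
    (1 : ℝ) ≤ (⌈(W : ℝ) / (c : ℝ)⌉ : ℝ) := by
  have h : (0 : ℝ) < (W : ℝ) / (c : ℝ) :=
    div_pos (by exact_mod_cast hW) (by exact_mod_cast hc)
  exact_mod_cast Int.ceil_pos.mpr h

lemma ceil_div_mono {W c c' : ℕ} (hc' : 0 < c') (hcc : c' ≤ c) :
    (⌈(W : ℝ) / (c : ℝ)⌉ : ℝ) ≤ (⌈(W : ℝ) / (c' : ℝ)⌉ : ℝ) := by
  have h : (W : ℝ) / (c : ℝ) ≤ (W : ℝ) / (c' : ℝ) := by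
    apply div_le_div_of_nonneg_left (by positivity)
      (by exact_mod_cast hc') (by exact_mod_cast hcc)
  exact_mod_cast Int.ceil_le_ceil h

lemma thetaL_bdd (P : DPath) (a b : ℕ) (y : ℝ) :
    BddAbove (insert 0 {t : ℝ | ∃ i, a ≤ i ∧ i ≤ b ∧ P.x i < y ∧ 1 ≤ P.W a i ∧
      t = (y - P.x i) * P.τ + (⌈(P.W a i : ℝ) / (P.cL b y i : ℝ)⌉ : ℝ) - 1}) := by
  apply Set.Finite.bddAbove
  apply Set.Finite.insert
  apply Set.Finite.subset ((Set.finite_Iic b).image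
    (fun i => (y - P.x i) * P.τ + (⌈(P.W a i : ℝ) / (P.cL b y i : ℝ)⌉ : ℝ) - 1))
  rintro t ⟨i, _, hib, _, _, rfl⟩
  exact ⟨i, hib, rfl⟩

lemma thetaR_bdd (P : DPath) (a b : ℕ) (y : ℝ) :
    BddAbove (insert 0 {t : ℝ | ∃ i, a ≤ i ∧ i ≤ b ∧ y < P.x i ∧ 1 ≤ P.W i b ∧
      t = (P.x i - y) * P.τ + (⌈(P.W i b : ℝ) / (P.cR a y i : ℝ)⌉ : ℝ) - 1}) := by
  apply Set.Finite.bddAbove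
  apply Set.Finite.insert
  apply Set.Finite.subset ((Set.finite_Iic b).image
    (fun i => (P.x i - y) * P.τ + (⌈(P.W i b : ℝ) / (P.cR a y i : ℝ)⌉ : ℝ) - 1))
  rintro t ⟨i, _, hib, _, _, rfl⟩
  exact ⟨i, hib, rfl⟩

/-- all discontinuities of `Θ_L(P,·)` jump upward (the right limit
at `x_i`, namely `Θ_L(P,x_{i+1}) − τ·(x_{i+1} − x_i)`, is `≥ Θ_L(P,x_i)`), and
symmetrically for `Θ_R(P,·)`. -/
theorem stmt5 (P : DPath) (hn : 1 ≤ P.n) :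
    (1 ≤ P.w 0 → ∀ i, i < P.n →
      ThetaL P 0 P.n (P.x (i + 1)) - P.τ * (P.x (i + 1) - P.x i) ≥
        ThetaL P 0 P.n (P.x i)) ∧
    (1 ≤ P.w P.n → ∀ i, i < P.n →
      ThetaR P 0 P.n (P.x i) - P.τ * (P.x (i + 1) - P.x i) ≥
        ThetaR P 0 P.n (P.x (i + 1))) := by
  constructor
  · -- Left part
    intro hw i hi
    have hin : i ≤ P.n := le_of_lt hi
    have hxy : P.x i < P.x (i + 1) := P.hx i hi
    have hbdd := thetaL_bdd P 0 P.n (P.x (i + 1))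
    rw [ge_iff_le]
    unfold ThetaL
    -- the jump at the right limit is at least τ·Δ, witnessed by index 0
    have hΔ : P.τ * (P.x (i + 1) - P.x i) ≤ ThetaL P 0 P.n (P.x (i + 1)) := by
      have hW0 : 1 ≤ P.W 0 0 := by simpa [DPath.W] using hw
      have hx0' : P.x 0 < P.x (i + 1) := P.x_lt (Nat.succ_pos i) hi
      have hne : ({j | 0 + 1 ≤ j ∧ j ≤ P.n ∧ P.x (j - 1) < P.x (i + 1)}).Nonempty :=
        ⟨i + 1, by omega, hi, by simpa using hxy⟩
      have hcpos := P.cL_pos (le_refl P.n) hne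
      have hceil := ceil_div_one_le hW0 hcpos
      have hmem : ((P.x (i + 1) - P.x 0) * P.τ +
          (⌈(P.W 0 0 : ℝ) / (P.cL P.n (P.x (i + 1)) 0 : ℝ)⌉ : ℝ) - 1) ∈
          insert 0 {t : ℝ | ∃ k, 0 ≤ k ∧ k ≤ P.n ∧ P.x k < P.x (i + 1) ∧ 1 ≤ P.W 0 k ∧
            t = (P.x (i + 1) - P.x k) * P.τ +
              (⌈(P.W 0 k : ℝ) / (P.cL P.n (P.x (i + 1)) k : ℝ)⌉ : ℝ) - 1} :=
        Set.mem_insert_of_mem _ ⟨0, le_refl 0, Nat.zero_le _, hx0', hW0, rfl⟩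
      have hsup := le_csSup hbdd hmem
      have hx0le : P.x 0 ≤ P.x i := P.x_le (Nat.zero_le i) hin
      have hmul : (P.x (i + 1) - P.x i) * P.τ ≤ (P.x (i + 1) - P.x 0) * P.τ :=
        mul_le_mul_of_nonneg_right (by linarith) P.hτ.le
      unfold ThetaL
      nlinarith [P.hτ.le]
    apply csSup_le ⟨0, Set.mem_insert 0 _⟩
    rintro t (rfl | ⟨j, -, hjn, hxj, hWj, rfl⟩)
    · unfold ThetaL at hΔ
      linarith
    · -- j contributes at x i; it also contributes at x (i+1)
      have hji : j < i := by
        by_contra h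
        push_neg at h
        exact absurd hxj (not_lt.mpr (P.x_le h hjn))
      have hne : ({e | j + 1 ≤ e ∧ e ≤ P.n ∧ P.x (e - 1) < P.x i}).Nonempty :=
        ⟨j + 1, le_refl _, by omega, by simpa using hxj⟩
      have hne' : ({e | j + 1 ≤ e ∧ e ≤ P.n ∧ P.x (e - 1) < P.x (i + 1)}).Nonempty :=
        ⟨j + 1, le_refl _, by omega, by simpa using lt_trans hxj hxy⟩
      have hcpos' := P.cL_pos (le_refl P.n) hne'
      have hcle : P.cL P.n (P.x (i + 1)) j ≤ P.cL P.n (P.x i) j :=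
        P.cL_anti (le_of_lt hxy) hne
      have hceil := ceil_div_mono (W := P.W 0 j) hcpos' hcle
      have hmem : ((P.x (i + 1) - P.x j) * P.τ +
          (⌈(P.W 0 j : ℝ) / (P.cL P.n (P.x (i + 1)) j : ℝ)⌉ : ℝ) - 1) ∈
          insert 0 {t : ℝ | ∃ k, 0 ≤ k ∧ k ≤ P.n ∧ P.x k < P.x (i + 1) ∧ 1 ≤ P.W 0 k ∧
            t = (P.x (i + 1) - P.x k) * P.τ +
              (⌈(P.W 0 k : ℝ) / (P.cL P.n (P.x (i + 1)) k : ℝ)⌉ : ℝ) - 1} :=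
        Set.mem_insert_of_mem _ ⟨j, Nat.zero_le _, hjn, lt_trans hxj hxy, hWj, rfl⟩
      have hsup := le_csSup hbdd hmem
      have hring : (P.x i - P.x j) * P.τ + P.τ * (P.x (i + 1) - P.x i) =
          (P.x (i + 1) - P.x j) * P.τ := by ring
      linarith
  · -- Right part
    intro hw i hi
    have hin : i ≤ P.n := le_of_lt hi
    have hin' : i + 1 ≤ P.n := hi
    have hxy : P.x i < P.x (i + 1) := P.hx i hi
    have hbdd := thetaR_bdd P 0 P.n (P.x i)
    rw [ge_iff_le]
    unfold ThetaR
    have hΔ : P.τ * (P.x (i + 1) - P.x i) ≤ ThetaR P 0 P.n (P.x i) := by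
      have hWn : 1 ≤ P.W P.n P.n := by simpa [DPath.W] using hw
      have hxn : P.x i < P.x P.n := P.x_lt hi (le_refl _)
      have hne : ({j | 0 + 1 ≤ j ∧ j ≤ P.n ∧ P.x i < P.x j}).Nonempty :=
        ⟨P.n, by omega, le_refl _, hxn⟩
      have hcpos := P.cR_pos (le_refl P.n) hne
      have hceil := ceil_div_one_le hWn hcpos
      have hmem : ((P.x P.n - P.x i) * P.τ +
          (⌈(P.W P.n P.n : ℝ) / (P.cR 0 (P.x i) P.n : ℝ)⌉ : ℝ) - 1) ∈
          insert 0 {t : ℝ | ∃ k, 0 ≤ k ∧ k ≤ P.n ∧ P.x i < P.x k ∧ 1 ≤ P.W k P.n ∧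
            t = (P.x k - P.x i) * P.τ +
              (⌈(P.W k P.n : ℝ) / (P.cR 0 (P.x i) k : ℝ)⌉ : ℝ) - 1} :=
        Set.mem_insert_of_mem _ ⟨P.n, Nat.zero_le _, le_refl _, hxn, hWn, rfl⟩
      have hsup := le_csSup hbdd hmem
      have hxnle : P.x (i + 1) ≤ P.x P.n := P.x_le hin' (le_refl _)
      have hmul : (P.x (i + 1) - P.x i) * P.τ ≤ (P.x P.n - P.x i) * P.τ :=
        mul_le_mul_of_nonneg_right (by linarith) P.hτ.le
      unfold ThetaR
      nlinarith [P.hτ.le]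
    apply csSup_le ⟨0, Set.mem_insert 0 _⟩
    rintro t (rfl | ⟨j, -, hjn, hxj, hWj, rfl⟩)
    · unfold ThetaR at hΔ
      linarith
    · have hj1 : 1 ≤ j := by
        rcases Nat.eq_zero_or_pos j with rfl | h
        · exact absurd hxj (not_lt.mpr (P.x_le (Nat.zero_le _) hin'))
        · exact h
      have hne' : ({e | 0 + 1 ≤ e ∧ e ≤ j ∧ P.x (i + 1) < P.x e}).Nonempty :=
        ⟨j, by omega, le_refl _, hxj⟩
      have hne : ({e | 0 + 1 ≤ e ∧ e ≤ j ∧ P.x i < P.x e}).Nonempty :=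
        ⟨j, by omega, le_refl _, lt_trans hxy hxj⟩
      have hcpos := P.cR_pos hjn hne
      have hcle : P.cR 0 (P.x i) j ≤ P.cR 0 (P.x (i + 1)) j :=
        P.cR_anti (le_of_lt hxy) hne'
      have hceil := ceil_div_mono (W := P.W j P.n) hcpos hcle
      have hmem : ((P.x j - P.x i) * P.τ +
          (⌈(P.W j P.n : ℝ) / (P.cR 0 (P.x i) j : ℝ)⌉ : ℝ) - 1) ∈
          insert 0 {t : ℝ | ∃ k, 0 ≤ k ∧ k ≤ P.n ∧ P.x i < P.x k ∧ 1 ≤ P.W k P.n ∧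
            t = (P.x k - P.x i) * P.τ +
              (⌈(P.W k P.n : ℝ) / (P.cR 0 (P.x i) k : ℝ)⌉ : ℝ) - 1} :=
        Set.mem_insert_of_mem _ ⟨j, Nat.zero_le _, hjn, lt_trans hxy hxj, hWj, rfl⟩
      have hsup := le_csSup hbdd hmem
      have hring : (P.x j - P.x (i + 1)) * P.τ + P.τ * (P.x (i + 1) - P.x i) =
          (P.x j - P.x i) * P.τ := by ring
      linarith
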